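/- In the setting of the interface move distance $\alpha$ on subsets of $\Lambda = \mathbb{Z}/N\mathbb{Z}$ ($N$ odd), the generalized translation $T$ (with $TX = \{1\}\triangle(X+1)$) preserves $\alpha$: for all $X, Y \subseteq \Lambda$ and all integers $s$, $\alpha(T^s X \to T^s Y) = \alpha(X \to Y)$. -/

import Mathlib

open scoped Classical symmDiff

/-- `j : X` : the bond `⟨j, j+1⟩` has exactly one endpoint in `X`. -/
def bdry (N : ℕ) (X : Finset (ZMod N)) (j : ZMod N) : Prop :=
  (j ∈ X ∧ j + 1 ∉ X) ∨ (j + 1 ∈ X ∧ j ∉ X)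

/-- `j :: X` (`j` is an interface site of `X`): for `j ≠ N` this means `j : X`;
for `j = N` (i.e. `j = 0` in `ZMod N`) it means both or neither of `N, 1` lie in `X`. -/
def dbdry (N : ℕ) (X : Finset (ZMod N)) (j : ZMod N) : Prop :=
  if j = 0 then ¬ bdry N X j else bdry N X j

/-- An interface move: replace `X` by `X ∆ {j, j+1}` for an interface site `j` of `X`. -/
def move (N : ℕ) (X Y : Finset (ZMod N)) : Prop :=
  ∃ j : ZMod N, dbdry N X j ∧ Y = X ∆ ({j, j + 1} : Finset (ZMod N))

/-- `α(X → Y)`: the minimal number of interface moves carrying `X` to `Y`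
(`⊤` if no such sequence of moves exists). -/
noncomputable def alpha (N : ℕ) (X Y : Finset (ZMod N)) : ℕ∞ :=
  sInf {c : ℕ∞ | ∃ n : ℕ, c = (n : ℕ∞) ∧ ∃ f : ℕ → Finset (ZMod N),
    f 0 = X ∧ f n = Y ∧ ∀ k < n, move N (f k) (f (k + 1))}

/-- The generalized translation `T X = {1} ∆ (X + 1)`. -/
noncomputable def T (N : ℕ) (X : Finset (ZMod N)) : Finset (ZMod N) :=
  ({1} : Finset (ZMod N)) ∆ (X.image (· + 1))

namespace Stmt15Aux

variable {N : ℕ}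

lemma add_one_inj : Function.Injective (fun x : ZMod N => x + 1) :=
  fun a b h => by simpa using h

lemma mem_T {X : Finset (ZMod N)} {k : ZMod N} :
    k ∈ T N X ↔ ¬((k = 1) ↔ (k - 1 ∈ X)) := by
  have himg : k ∈ X.image (· + 1) ↔ k - 1 ∈ X := by
    simp only [Finset.mem_image]
    constructor
    · rintro ⟨a, ha, rfl⟩; simpa using ha
    · intro h; exact ⟨k - 1, h, by ring⟩
  rw [T, Finset.mem_symmDiff, Finset.mem_singleton, himg]
  tauto

lemma dbdry_T (X : Finset (ZMod N)) (j : ZMod N) :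
    dbdry N (T N X) (j + 1) ↔ dbdry N X j := by
  have h1 : (j + 1 : ZMod N) - 1 = j := by ring
  have h2 : (j + 1 + 1 : ZMod N) - 1 = j + 1 := by ring
  have h3 : ((j + 1 : ZMod N) = 1) ↔ j = 0 := add_eq_right
  have h4 : ((j + 1 + 1 : ZMod N) = 1) ↔ j + 1 = 0 := add_eq_right
  unfold dbdry bdry
  rw [mem_T, mem_T, h1, h2, h3, h4]
  rcases eq_or_ne j 0 with hj | hj
  · subst hj
    by_cases h0 : (1 : ZMod N) = 0 <;> simp [h0] <;> tauto
  · by_cases hj1 : (j + 1 : ZMod N) = 0 <;> simp [hj, hj1] <;> tauto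

lemma T_symmDiff (X S : Finset (ZMod N)) :
    T N (X ∆ S) = T N X ∆ S.image (· + 1) := by
  rw [T, T, Finset.image_symmDiff _ _ add_one_inj, symmDiff_assoc]

lemma Tinv_T (X : Finset (ZMod N)) :
    ((T N X) ∆ ({1} : Finset (ZMod N))).image (· - 1) = X := by
  rw [T, symmDiff_comm, symmDiff_symmDiff_cancel_left, Finset.image_image]
  have : ((· - 1) ∘ (· + 1) : ZMod N → ZMod N) = id := by
    funext a; simp
  rw [this, Finset.image_id]

lemma T_inj : Function.Injective (T N) := by
  intro a b h
  have := congrArg (fun Z : Finset (ZMod N) => (Z ∆ ({1} : Finset (ZMod N))).image (· - 1)) h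
  simpa [Tinv_T] using this

lemma T_Tinv (X : Finset (ZMod N)) :
    T N ((X ∆ ({1} : Finset (ZMod N))).image (· - 1)) = X := by
  rw [T, Finset.image_image]
  have h : ((· + 1) ∘ (· - 1) : ZMod N → ZMod N) = id := by funext a; simp
  rw [h, Finset.image_id, symmDiff_comm X, symmDiff_symmDiff_cancel_left]

lemma pair_image (j : ZMod N) :
    ({j, j + 1} : Finset (ZMod N)).image (· + 1) = {j + 1, j + 1 + 1} := by
  simp [Finset.image_insert]

lemma move_T {X Y : Finset (ZMod N)} :
    move N X Y ↔ move N (T N X) (T N Y) := by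
  constructor
  · rintro ⟨j, hd, rfl⟩
    exact ⟨j + 1, (dbdry_T X j).2 hd, by rw [T_symmDiff, pair_image]⟩
  · rintro ⟨j, hd, hY⟩
    refine ⟨j - 1, ?_, ?_⟩
    · have := dbdry_T X (j - 1)
      rw [sub_add_cancel] at this
      exact this.1 hd
    · apply T_inj
      rw [hY, T_symmDiff, pair_image, sub_add_cancel]

lemma alpha_T (X Y : Finset (ZMod N)) :
    alpha N (T N X) (T N Y) = alpha N X Y := by
  unfold alpha
  congr 1
  ext c
  constructor
  · rintro ⟨n, rfl, f, h0, hn, hm⟩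
    refine ⟨n, rfl, fun k => ((f k) ∆ ({1} : Finset (ZMod N))).image (· - 1), ?_, ?_, ?_⟩
    · show ((f 0) ∆ ({1} : Finset (ZMod N))).image (· - 1) = X
      rw [h0, Tinv_T]
    · show ((f n) ∆ ({1} : Finset (ZMod N))).image (· - 1) = Y
      rw [hn, Tinv_T]
    · intro k hk
      apply move_T.2
      show move N (T N (((f k) ∆ ({1} : Finset (ZMod N))).image (· - 1)))
        (T N (((f (k + 1)) ∆ ({1} : Finset (ZMod N))).image (· - 1)))
      rw [T_Tinv, T_Tinv]
      exact hm k hk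
  · rintro ⟨n, rfl, f, h0, hn, hm⟩
    refine ⟨n, rfl, fun k => T N (f k), ?_, ?_, fun k hk => move_T.1 (hm k hk)⟩
    · show T N (f 0) = T N X
      rw [h0]
    · show T N (f n) = T N Y
      rw [hn]

end Stmt15Aux

theorem stmt_15 (N : ℕ) [NeZero N] (hN : Odd N) (X Y : Finset (ZMod N)) (s : ℕ) :
    alpha N ((T N)^[s] X) ((T N)^[s] Y) = alpha N X Y := by
  induction s with
  | zero => simp
  | succ n ih =>
    rw [Function.iterate_succ_apply', Function.iterate_succ_apply',
      Stmt15Aux.alpha_T, ih]
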